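/- In the construction of the Blum speed-up set R with diagonalization threshold f^{|x|−i}(|x|): if Φ_i computes R, then time(Φ_i, x) ≥ f^{|x|−i}(|x|) for all but finitely many x with |x| ≥ i. -/

import Mathlib

open Filter Nat.Partrec

/-- Length of the binary string coded by `x` under the length-lexicographic
identification of strings with natural numbers. -/
def strLen (x : ℕ) : ℕ := Nat.size (x + 1) - 1

/-- Running time of the machine (code) `c` on input `x`: the least number of
steps after which the step-indexed evaluation converges. -/
noncomputable def ctime (c : Code) (x : ℕ) : ℕ :=
  sInf {s | (Code.evaln s c x).isSome}

/-- The machine `c` computes the 0-1 valued language `R`. -/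
def CodeComputes (c : Code) (R : ℕ → Bool) : Prop :=
  ∀ x, ∃ s, Code.evaln s c x = some (cond (R x) 1 0)

/-- One step of the Blum construction: on string `x`, find the least active
index `i ≤ |x|` (i.e. `i` not diagonalized at an earlier stage, as recorded in
`prev`) such that `Φ_i(x)` converges within `f^{|x|-i}(|x|)` steps. -/
def blumStep (f : ℕ → ℕ) (x : ℕ) (prev : List (Option ℕ)) : Option ℕ :=
  (List.range (strLen x + 1)).find? fun i =>
    !(prev.contains (some i)) &&
      (Code.evaln (f^[strLen x - i] (strLen x)) (Denumerable.ofNat Code i) x).isSome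

/-- The list of diagonalization decisions made at stages `0, …, x - 1`. -/
def blumDiagList (f : ℕ → ℕ) : ℕ → List (Option ℕ)
  | 0 => []
  | x + 1 => blumDiagList f x ++ [blumStep f x (blumDiagList f x)]

/-- The index (if any) diagonalized against at stage `x`. -/
def blumDiag (f : ℕ → ℕ) (x : ℕ) : Option ℕ := blumStep f x (blumDiagList f x)

/-- The Blum speed-up set `R`: at stage `x`, diagonalize against the chosen
index by outputting `1 - Φ_i(x)`; otherwise output `0`. -/
def blumR (f : ℕ → ℕ) (x : ℕ) : Bool :=
  match blumDiag f x with
  | Option.none => false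
  | some i =>
    match Code.evaln (f^[strLen x - i] (strLen x)) (Denumerable.ofNat Code i) x with
    | some v => decide (v = 0)
    | Option.none => false

/- ----------------- auxiliary lemmas ----------------- -/

lemma find?_range_min {p : ℕ → Bool} {n j : ℕ}
    (h : (List.range n).find? p = some j) : ∀ k < j, p k = false := by
  induction n with
  | zero => simp at h
  | succ n ih =>
    rw [List.range_succ, List.find?_append] at h
    cases hn : (List.range n).find? p with
    | some j' =>
      rw [hn] at h
      have hj : j' = j := Option.some_inj.mp h
      subst hj; exact ih hn
    | none =>
      rw [hn, Option.none_or] at h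
      have hj : j = n := by
        have := List.mem_of_find?_eq_some h
        simpa using this
      subst hj
      intro k hk
      have := List.find?_eq_none.mp hn k (List.mem_range.mpr hk)
      simpa using this

lemma blumDiagList_eq (f : ℕ → ℕ) (x : ℕ) :
    blumDiagList f x = (List.range x).map (blumDiag f) := by
  induction x with
  | zero => rfl
  | succ x ih =>
    rw [blumDiagList, List.range_succ, List.map_append, List.map_singleton, ih, blumDiag, ih]

lemma mem_blumDiagList {f : ℕ → ℕ} {x : ℕ} {o : Option ℕ} :
    o ∈ blumDiagList f x ↔ ∃ y < x, blumDiag f y = o := by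
  rw [blumDiagList_eq]
  simp [List.mem_map]

lemma evaln_unique {s1 s2 : ℕ} {c : Code} {x a b : ℕ}
    (h1 : Code.evaln s1 c x = some a) (h2 : Code.evaln s2 c x = some b) : a = b := by
  rcases le_total s1 s2 with hle | hle
  · have h3 : a ∈ Code.evaln s2 c x := Code.evaln_mono hle h1
    rw [h2] at h3
    exact (Option.some_inj.mp h3).symm
  · have h3 : b ∈ Code.evaln s1 c x := Code.evaln_mono hle h2
    rw [h1] at h3
    exact Option.some_inj.mp h3

lemma blumDiag_ne {f : ℕ → ℕ} {c : Code} (h : CodeComputes c (blumR f)) (y : ℕ) :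
    blumDiag f y ≠ some (Encodable.encode c) := by
  intro hd
  have hp := List.find?_some hd
  simp only [Bool.and_eq_true, Option.isSome_iff_exists] at hp
  obtain ⟨-, v, hv⟩ := hp
  have hv' : Code.evaln (f^[strLen y - Encodable.encode c] (strLen y)) c y = some v := by
    rwa [Denumerable.ofNat_encode] at hv
  have hR : blumR f y = decide (v = 0) := by
    simp [blumR, hd, hv']
  obtain ⟨s, hs⟩ := h y
  have huniq : v = cond (blumR f y) 1 0 := evaln_unique hv' hs
  rcases eq_or_ne v 0 with h0 | h0
  · rw [h0] at hR
    simp [hR] at huniq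
    omega
  · simp [h0] at hR
    rw [hR] at huniq
    simp at huniq
    exact h0 huniq

lemma blumDiag_lt {f : ℕ → ℕ} {c : Code} (h : CodeComputes c (blumR f)) {x : ℕ}
    (hL : Encodable.encode c ≤ strLen x)
    (hct : ctime c x < f^[strLen x - Encodable.encode c] (strLen x)) :
    ∃ j < Encodable.encode c, blumDiag f x = some j := by
  set i := Encodable.encode c with hi
  -- evaln converges within the threshold
  have hne : {s | (Code.evaln s c x).isSome}.Nonempty := by
    obtain ⟨s, hs⟩ := h x
    exact ⟨s, by simp [hs]⟩
  have hmem : (Code.evaln (ctime c x) c x).isSome := Nat.sInf_mem hne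
  obtain ⟨v, hv⟩ := Option.isSome_iff_exists.mp hmem
  have hv' : Code.evaln (f^[strLen x - i] (strLen x)) c x = some v :=
    Code.evaln_mono hct.le hv
  -- the predicate holds at `i`
  have hnotmem : some i ∉ blumDiagList f x := by
    rw [mem_blumDiagList]
    rintro ⟨y, -, hy⟩
    exact blumDiag_ne h y hy
  have hpi : (!(blumDiagList f x).contains (some i) &&
      (Code.evaln (f^[strLen x - i] (strLen x)) (Denumerable.ofNat Code i) x).isSome) = true := by
    rw [hi, Denumerable.ofNat_encode, ← hi]
    simp [hv', hnotmem]
  -- hence find? succeeds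
  have hsome : (blumDiag f x).isSome := by
    rw [blumDiag, blumStep, List.find?_isSome]
    exact ⟨i, List.mem_range.mpr (Nat.lt_succ_of_le hL), hpi⟩
  obtain ⟨j, hj⟩ := Option.isSome_iff_exists.mp hsome
  refine ⟨j, ?_, hj⟩
  have hj' := hj
  rw [blumDiag, blumStep] at hj'
  have hle : j ≤ i := by
    by_contra hlt
    have := find?_range_min hj' i (by omega)
    rw [this] at hpi
    exact Bool.false_ne_true hpi
  have hne' : j ≠ i := by
    intro e
    exact blumDiag_ne h x (by rw [hj, e, hi])
  omega

/-- Key property of the Blum construction with thresholds `f^{|x|-i}(|x|)`: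
if `Φ_i` computes `R`, then `time(Φ_i, x) ≥ f^{|x|-i}(|x|)` for all but
finitely many `x` with `|x| ≥ i`. -/
theorem blum_time_lower_bound (f : ℕ → ℕ) (c : Code)
    (h : CodeComputes c (blumR f)) :
    ∀ᶠ x in atTop, Encodable.encode c ≤ strLen x →
      f^[strLen x - Encodable.encode c] (strLen x) ≤ ctime c x := by
  set i := Encodable.encode c with hi
  set B : Set ℕ :=
    {x | ¬ (i ≤ strLen x → f^[strLen x - i] (strLen x) ≤ ctime c x)} with hB
  have hBfin : B.Finite := by
    have hclaim : ∀ x ∈ B, ∃ j < i, blumDiag f x = some j := by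
      intro x hx
      rw [hB, Set.mem_setOf_eq] at hx
      push_neg at hx
      exact blumDiag_lt h hx.1 hx.2
    refine Set.Finite.of_finite_image (f := fun x => (blumDiag f x).getD 0) ?_ ?_
    · refine (Set.finite_Iio i).subset ?_
      rintro j ⟨x, hx, rfl⟩
      obtain ⟨j', hj', hd⟩ := hclaim x hx
      simpa [hd] using hj'
    · intro x1 hx1 x2 hx2 hg
      obtain ⟨j1, hj1, hd1⟩ := hclaim x1 hx1
      obtain ⟨j2, hj2, hd2⟩ := hclaim x2 hx2
      simp only [hd1, hd2, Option.getD_some] at hg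
      subst hg
      by_contra hne
      rcases lt_or_gt_of_ne hne with hlt | hlt
      · have hp := List.find?_some hd2
        simp only [Bool.and_eq_true, Bool.not_eq_true'] at hp
        have : some j1 ∈ blumDiagList f x2 := mem_blumDiagList.mpr ⟨x1, hlt, hd1⟩
        have hc := hp.1
        simp only [List.contains_eq_any_beq, List.any_eq_false] at hc
        exact (by simpa using hc _ this : False)
      · have hp := List.find?_some hd1
        simp only [Bool.and_eq_true, Bool.not_eq_true'] at hp
        have : some j1 ∈ blumDiagList f x1 := mem_blumDiagList.mpr ⟨x2, hlt, hd2⟩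
        have hc := hp.1
        simp only [List.contains_eq_any_beq, List.any_eq_false] at hc
        exact (by simpa using hc _ this : False)
  rw [← Nat.cofinite_eq_atTop]
  filter_upwards [hBfin.eventually_cofinite_notMem] with x hx
  rw [hB, Set.mem_setOf_eq] at hx
  exact not_not.mp hx
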